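/- Let e₁, f₁, g₁ ∈ ℝ³ and (e₂,e₂'), (f₂,f₂'), (g₂,g₂') be pairs of vectors in ℝ³ such that the three determinants det(f₁,g₂,g₂'), det(e₁,f₂,f₂'), det(e₂,e₂',g₁) are nonzero, and let M be an invertible 3×3 real matrix. Then the triangle invariant is unchanged when every vector w among e₁,e₂,e₂',f₁,f₂,f₂',g₁,g₂,g₂' is replaced by M·w; that is, T(ME, MF, MG) = T(E,F,G). -/

import Mathlib

/-- The determinant of the 3×3 real matrix with columns `a`, `b`, `c`. -/
noncomputable def det3 (a b c : Fin 3 → ℝ) : ℝ :=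
  Matrix.det (Matrix.transpose (Matrix.of ![a, b, c]))

/-- The triangle invariant of a triple of flags `E`, `F`, `G` in `ℝ³`, where the flag `E`
consists of the line spanned by `e₁` and the plane spanned by `e₂, e₂'` (similarly for
`F` and `G`). -/
noncomputable def triangleInv (e₁ e₂ e₂' f₁ f₂ f₂' g₁ g₂ g₂' : Fin 3 → ℝ) : ℝ :=
  (det3 e₂ e₂' f₁ / det3 f₁ g₂ g₂') * (det3 e₁ g₂ g₂' / det3 e₁ f₂ f₂') *
    (det3 f₂ f₂' g₁ / det3 e₂ e₂' g₁)

lemma det3_mulVec (M : Matrix (Fin 3) (Fin 3) ℝ) (a b c : Fin 3 → ℝ) :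
    det3 (M.mulVec a) (M.mulVec b) (M.mulVec c) = M.det * det3 a b c := by
  have : Matrix.transpose (Matrix.of ![M.mulVec a, M.mulVec b, M.mulVec c])
      = M * Matrix.transpose (Matrix.of ![a, b, c]) := by
    ext i j
    fin_cases j <;>
      simp [Matrix.mul_apply, Matrix.mulVec, dotProduct, Matrix.transpose]
  simp [det3, this, Matrix.det_mul]

/-- The triangle invariant is invariant under the action of an invertible matrix `M`
on all the vectors defining the three flags: `T(ME,MF,MG) = T(E,F,G)`. -/
theorem triangleInv_matrix_invariant (e₁ e₂ e₂' f₁ f₂ f₂' g₁ g₂ g₂' : Fin 3 → ℝ)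
    (h₂ : det3 f₁ g₂ g₂' ≠ 0) (h₄ : det3 e₁ f₂ f₂' ≠ 0) (h₆ : det3 e₂ e₂' g₁ ≠ 0)
    (M : Matrix (Fin 3) (Fin 3) ℝ) (hM : IsUnit M) :
    triangleInv (M.mulVec e₁) (M.mulVec e₂) (M.mulVec e₂') (M.mulVec f₁)
      (M.mulVec f₂) (M.mulVec f₂') (M.mulVec g₁) (M.mulVec g₂) (M.mulVec g₂')
    = triangleInv e₁ e₂ e₂' f₁ f₂ f₂' g₁ g₂ g₂' := by
  have hd : M.det ≠ 0 := by
    simpa [Matrix.isUnit_iff_isUnit_det, isUnit_iff_ne_zero] using hM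
  simp only [triangleInv, det3_mulVec]
  field_simp
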